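/- Let K be an r-prox-regular closed subset of a real Hilbert space H for some r > 0. Then for every u ∈ H with d(u,K) < r, the set Proj_K(u) of nearest points of K to u is a singleton. -/

import Mathlib

open Metric Set
open scoped RealInnerProductSpace

variable {H : Type*} [NormedAddCommGroup H] [InnerProductSpace ℝ H]

/-- The set of nearest points of `K` to `y`. -/
noncomputable def projSet (K : Set H) (y : H) : Set H :=
  {x | x ∈ K ∧ ‖x - y‖ = Metric.infDist y K}

/-- The proximal normal cone to `K` at `x`. -/
def proxNormalCone (K : Set H) (x : H) : Set H :=
  {u | ∃ l : ℝ, 0 ≤ l ∧ ∃ y : H, x ∈ projSet K y ∧ u = l • (y - x)}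

/-- `K` is `r`-prox-regular. -/
def IsProxRegular (r : ℝ) (K : Set H) : Prop :=
  ∀ y : H, 0 < Metric.infDist y K → Metric.infDist y K < r →
    (projSet K y).Nonempty ∧
      ∀ x ∈ projSet K y, x ∈ projSet K (x + (r / ‖y - x‖) • (y - x))

/-- The excess of `A` over `B`: `e(A,B) = sup_{a ∈ A} d(a,B)`. -/
noncomputable def excess (A B : Set H) : ENNReal := ⨆ a ∈ A, EMetric.infEdist a B

/-- Key estimate: if `x₁` is a nearest point to `u` at distance `d` and the point
`z = x₁ + (r/d)(u - x₁)` is at distance at least `r` from `x₂`, then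
`⟪x₂ - x₁, u - x₁⟫ ≤ (d/(2r)) ‖x₂ - x₁‖²`. -/
lemma key_est (r d : ℝ) (hr : 0 < r) (hd : 0 < d) (u x₁ x₂ : H)
    (h1 : ‖u - x₁‖ = d)
    (hz : r ≤ ‖x₂ - (x₁ + (r / d) • (u - x₁))‖) :
    ⟪x₂ - x₁, u - x₁⟫ ≤ d / (2 * r) * ‖x₂ - x₁‖ ^ 2 := by
  set c : ℝ := r / d with hc
  have hcpos : 0 < c := div_pos hr hd
  set v : H := x₂ - x₁ with hv
  set w : H := u - x₁ with hw
  have hexp : ‖v - c • w‖ ^ 2 = ‖v‖ ^ 2 - 2 * (c * ⟪v, w⟫) + c ^ 2 * d ^ 2 := by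
    rw [norm_sub_sq_real, real_inner_smul_right, norm_smul, mul_pow]
    rw [hw, h1]
    have : |c| = c := abs_of_pos hcpos
    rw [Real.norm_eq_abs, this]
  have hcd : c ^ 2 * d ^ 2 = r ^ 2 := by
    rw [hc, div_pow, div_mul_cancel₀]; positivity
  have hz' : r ^ 2 ≤ ‖v - c • w‖ ^ 2 := by
    have hx : x₂ - (x₁ + (r / d) • (u - x₁)) = v - c • w := by
      rw [hv, hw, hc]; abel
    have := pow_le_pow_left₀ hr.le hz 2
    rwa [hx] at this
  rw [hexp, hcd] at hz'
  have h2 : 2 * (c * ⟪v, w⟫) ≤ ‖v‖ ^ 2 := by linarith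
  have : ⟪v, w⟫ ≤ ‖v‖ ^ 2 / (2 * c) := by
    rw [le_div_iff₀ (by positivity)]
    linarith [h2]
  calc ⟪v, w⟫ ≤ ‖v‖ ^ 2 / (2 * c) := this
    _ = d / (2 * r) * ‖v‖ ^ 2 := by
        rw [hc]; field_simp

theorem stmt_3 [CompleteSpace H] (r : ℝ) (hr : 0 < r) (K : Set H)
    (hK : IsClosed K) (hKne : K.Nonempty) (hreg : IsProxRegular r K)
    (u : H) (hu : Metric.infDist u K < r) :
    ∃ x : H, projSet K u = {x} := by
  set d : ℝ := Metric.infDist u K with hd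
  have hd0 : 0 ≤ d := Metric.infDist_nonneg
  rcases eq_or_lt_of_le hd0 with hdeq | hdpos
  · -- d = 0 : u ∈ K, projSet = {u}
    have huK : u ∈ K := by
      rw [← hK.closure_eq]
      exact Metric.mem_closure_iff_infDist_zero hKne |>.2 hdeq.symm
    refine ⟨u, ?_⟩
    ext x
    simp only [projSet, mem_setOf_eq, mem_singleton_iff, ← hd, ← hdeq]
    constructor
    · rintro ⟨-, hx⟩
      rwa [norm_eq_zero, sub_eq_zero] at hx
    · rintro rfl
      simpa using huK
  · -- 0 < d < r
    obtain ⟨hne, hproj⟩ := hreg u hdpos (by rwa [← hd])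
    obtain ⟨x₀, hx₀⟩ := hne
    refine ⟨x₀, ?_⟩
    -- uniqueness via the key estimate
    have uniq : ∀ x₁ ∈ projSet K u, ∀ x₂ ∈ projSet K u, x₁ = x₂ := by
      intro x₁ h1 x₂ h2
      have main : ∀ a ∈ projSet K u, ∀ b ∈ projSet K u,
          ⟪b - a, u - a⟫ ≤ d / (2 * r) * ‖b - a‖ ^ 2 := by
        intro a ha b hb
        have hna : ‖u - a‖ = d := by rw [norm_sub_rev]; exact ha.2
        have hz := hproj a ha
        have hzdist : ‖a - (a + (r / ‖u - a‖) • (u - a))‖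
            = Metric.infDist (a + (r / ‖u - a‖) • (u - a)) K := hz.2
        have hrd : ‖a - (a + (r / ‖u - a‖) • (u - a))‖ = r := by
          rw [hna]
          have : a - (a + (r / d) • (u - a)) = -((r / d) • (u - a)) := by abel
          rw [this, norm_neg, norm_smul, hna, Real.norm_eq_abs,
            abs_of_pos (div_pos hr hdpos)]
          field_simp
        have hge : r ≤ ‖b - (a + (r / d) • (u - a))‖ := by
          have := Metric.infDist_le_dist_of_mem (x := a + (r / ‖u - a‖) • (u - a)) hb.1
          rw [← hzdist, hrd] at this
          rw [hna] at this
          rwa [dist_eq_norm, norm_sub_rev] at this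
        exact key_est r d hr hdpos u a b hna hge
      have e1 := main x₁ h1 x₂ h2
      have e2 := main x₂ h2 x₁ h1
      have hnorm : ‖x₁ - x₂‖ = ‖x₂ - x₁‖ := norm_sub_rev _ _
      have hsum : ‖x₂ - x₁‖ ^ 2 ≤ d / r * ‖x₂ - x₁‖ ^ 2 := by
        have hinner : ⟪x₂ - x₁, u - x₁⟫ + ⟪x₁ - x₂, u - x₂⟫ = ‖x₂ - x₁‖ ^ 2 := by
          have : ⟪x₁ - x₂, u - x₂⟫ = -⟪x₂ - x₁, u - x₂⟫ := by
            rw [← inner_neg_left]; congr 1; abel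
          rw [this, ← sub_eq_add_neg, ← inner_sub_right, ← real_inner_self_eq_norm_sq]
          congr 1; abel
        rw [hnorm] at e2
        have : d / (2 * r) + d / (2 * r) = d / r := by field_simp; ring
        nlinarith [e1, e2, hinner]
      have hlt : d / r < 1 := (div_lt_one hr).2 hu
      have : ‖x₂ - x₁‖ ^ 2 = 0 := by nlinarith [sq_nonneg (‖x₂ - x₁‖)]
      have := pow_eq_zero_iff (n := 2) (by norm_num) |>.1 this
      rw [norm_eq_zero, sub_eq_zero] at this
      exact this.symm
    ext x
    simp only [mem_singleton_iff]
    exact ⟨fun hx => (uniq x₀ hx₀ x hx).symm, fun h => h ▸ hx₀⟩
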